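/- The ribbon multiplication rule in Sym: for compositions K = (k₁,...,k_r) of m and K' = (k'₁,...,k'_s) of m', one has R_K · R_{K'} = R_{(k₁,...,k_r,k'₁,...,k'_s)} + R_{(k₁,...,k_{r-1}, k_r + k'₁, k'₂,...,k'_s)}, equivalently, in terms of descent sets, Des(K·K') = Des(K) ∪ {m} ∪ (Des(K')+m) and Des(K▷K') = Des(K) ∪ (Des(K')+m). -/
import Mathlib


/-- Noncommutative symmetric functions: free algebra on the complete functions. -/
abbrev NCSym : Type := FreeAlgebra ℚ ℕ

/-- The complete noncommutative symmetric function `Sₙ`. -/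
def Scomp (n : ℕ) : NCSym := FreeAlgebra.ι ℚ n

/-- `S^J = S_{j₁} ⋯ S_{j_r}` for a composition `J`. -/
def Sprod {n : ℕ} (c : Composition n) : NCSym := (c.blocks.map Scomp).prod

/-- The descent set of a composition of `n`. -/
def Composition.des {n : ℕ} (c : Composition n) : Finset ℕ :=
  (Finset.range (c.length - 1)).image (fun i => c.sizeUpTo (i + 1))

/-- The ribbon basis `R_I = Σ_{Des J ⊆ Des I} (-1)^{l(I)-l(J)} S^J`. -/
def Rib {n : ℕ} (c : Composition n) : NCSym :=
  ∑ d ∈ Finset.univ.filter (fun d : Composition n => d.des ⊆ c.des),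
    ((-1 : ℚ) ^ (c.length + d.length)) • Sprod d

namespace RibAux

/-- Concatenation of compositions. -/
def capp {m m' : ℕ} (c : Composition m) (c' : Composition m') : Composition (m + m') :=
  ⟨c.blocks ++ c'.blocks, by
    intro i hi
    rcases List.mem_append.1 hi with h | h
    exacts [c.blocks_pos h, c'.blocks_pos h], by
    simp [c.blocks_sum, c'.blocks_sum]⟩

@[simp] lemma capp_blocks {m m' : ℕ} (c : Composition m) (c' : Composition m') :
    (capp c c').blocks = c.blocks ++ c'.blocks := rfl

@[simp] lemma capp_length {m m' : ℕ} (c : Composition m) (c' : Composition m') :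
    (capp c c').length = c.length + c'.length := by
  simp [Composition.length, capp]

lemma Sprod_capp {m m' : ℕ} (c : Composition m) (c' : Composition m') :
    Sprod (capp c c') = Sprod c * Sprod c' := by
  simp [Sprod, capp]

lemma sizeUpTo_capp {m m' : ℕ} (c : Composition m) (c' : Composition m') (i : ℕ) :
    (capp c c').sizeUpTo i = c.sizeUpTo i + c'.sizeUpTo (i - c.length) := by
  rcases le_or_gt i c.length with h | h
  · have : i - c.length = 0 := Nat.sub_eq_zero_of_le h
    rw [this, Composition.sizeUpTo_zero, add_zero]
    simp only [Composition.sizeUpTo, capp_blocks]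
    rw [List.take_append, Nat.sub_eq_zero_of_le (by simpa using h)]
    simp
  · have h' : c.length ≤ i := h.le
    rw [Composition.sizeUpTo_ofLength_le c i h']
    simp only [Composition.sizeUpTo, capp_blocks]
    rw [List.take_append]
    rw [List.take_of_length_le (by simpa using h'), List.sum_append, c.blocks_sum]

lemma sizeUpTo_lt_sizeUpTo {n : ℕ} (c : Composition n) {i j : ℕ} (hij : i < j)
    (hj : j ≤ c.length) : c.sizeUpTo i < c.sizeUpTo j :=
  lt_of_lt_of_le (c.sizeUpTo_strict_mono (lt_of_lt_of_le hij hj))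
    (c.monotone_sizeUpTo hij)

lemma mem_des_iff {n : ℕ} (c : Composition n) (x : ℕ) :
    x ∈ c.des ↔ ∃ i, i + 1 < c.length ∧ c.sizeUpTo (i + 1) = x := by
  simp only [Composition.des, Finset.mem_image, Finset.mem_range]
  constructor
  · rintro ⟨i, hi, rfl⟩; exact ⟨i, by omega, rfl⟩
  · rintro ⟨i, hi, rfl⟩; exact ⟨i, by omega, rfl⟩

lemma des_pos {n : ℕ} (c : Composition n) {x : ℕ} (hx : x ∈ c.des) : 0 < x := by
  obtain ⟨i, hi, rfl⟩ := (mem_des_iff c x).1 hx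
  have := sizeUpTo_lt_sizeUpTo c (i := 0) (j := i + 1) (by omega) (by omega)
  simpa [Composition.sizeUpTo_zero] using this

lemma des_lt {n : ℕ} (c : Composition n) {x : ℕ} (hx : x ∈ c.des) : x < n := by
  obtain ⟨i, hi, rfl⟩ := (mem_des_iff c x).1 hx
  have := sizeUpTo_lt_sizeUpTo c (i := i + 1) (j := c.length) hi le_rfl
  simpa [Composition.sizeUpTo_length] using this

lemma card_des {n : ℕ} (c : Composition n) : c.des.card = c.length - 1 := by
  rw [Composition.des, Finset.card_image_of_injOn, Finset.card_range]
  intro i hi j hj hij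
  simp only [Finset.mem_coe, Finset.mem_range] at hi hj
  by_contra h
  rcases Nat.lt_or_ge i j with h' | h'
  · exact absurd hij (ne_of_lt (sizeUpTo_lt_sizeUpTo c (by omega) (by omega)))
  · have : j < i := by omega
    exact absurd hij.symm (ne_of_lt (sizeUpTo_lt_sizeUpTo c (by omega) (by omega)))

lemma length_eq_card_des {n : ℕ} (c : Composition n) (hn : 0 < n) :
    c.length = c.des.card + 1 := by
  have := c.length_pos_of_pos hn
  rw [card_des]; omega

lemma des_capp {m m' : ℕ} (hm : 0 < m) (hm' : 0 < m')
    (c : Composition m) (c' : Composition m') :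
    (capp c c').des = c.des ∪ {m} ∪ c'.des.image (fun d => d + m) := by
  have hr : 0 < c.length := c.length_pos_of_pos hm
  have hs : 0 < c'.length := c'.length_pos_of_pos hm'
  ext x
  simp only [Finset.mem_union, Finset.mem_singleton, Finset.mem_image, mem_des_iff,
    capp_length, sizeUpTo_capp]
  constructor
  · rintro ⟨i, hi, rfl⟩
    rcases lt_trichotomy (i + 1) c.length with h | h | h
    · left; left
      refine ⟨i, h, ?_⟩
      rw [Nat.sub_eq_zero_of_le (by omega), Composition.sizeUpTo_zero, add_zero]
    · left; right
      rw [h, Nat.sub_self, Composition.sizeUpTo_zero, add_zero, Composition.sizeUpTo_length]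
    · right
      obtain ⟨j, hj⟩ : ∃ j, i + 1 = c.length + (j + 1) := ⟨i - c.length, by omega⟩
      refine ⟨c'.sizeUpTo (j + 1), ⟨j, by omega, rfl⟩, ?_⟩
      rw [hj, Composition.sizeUpTo_ofLength_le c _ (by omega)]
      have h2 : c.length + (j + 1) - c.length = j + 1 := by omega
      rw [h2, add_comm]
  · rintro ((⟨i, hi, hx⟩ | hx) | ⟨y, ⟨j, hj, hy⟩, hx⟩)
    · exact ⟨i, by omega, by
        rw [Nat.sub_eq_zero_of_le (by omega), Composition.sizeUpTo_zero, add_zero, hx]⟩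
    · refine ⟨c.length - 1, by omega, ?_⟩
      have h1 : c.length - 1 + 1 = c.length := by omega
      rw [h1, Nat.sub_self, Composition.sizeUpTo_zero, add_zero, Composition.sizeUpTo_length, hx]
    · refine ⟨c.length + j, by omega, ?_⟩
      rw [Composition.sizeUpTo_ofLength_le c _ (by omega)]
      have h2 : c.length + j + 1 - c.length = j + 1 := by omega
      rw [h2, hy, add_comm, hx]

lemma list_split_unique : ∀ (l1 : List ℕ) (l3 l2 l4 : List ℕ),
    (∀ x ∈ l1, 0 < x) → (∀ x ∈ l3, 0 < x) →
    l1 ++ l2 = l3 ++ l4 → l1.sum = l3.sum → l1 = l3 ∧ l2 = l4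
  | [], l3, l2, l4, _, h3, happ, hsum => by
    have : l3.sum = 0 := by simpa using hsum.symm
    have h0 : l3 = [] := by
      cases l3 with
      | nil => rfl
      | cons a t =>
        exfalso
        have ha := h3 a (by simp)
        have hsum0 : a + t.sum = 0 := by simpa [List.sum_cons] using this
        omega
    subst h0
    simpa using happ
  | a :: t, l3, l2, l4, h1, h3, happ, hsum => by
    cases l3 with
    | nil =>
      exfalso
      have ha := h1 a (by simp)
      simp [List.sum_cons] at hsum
      omega
    | cons b t3 =>
      simp only [List.cons_append, List.cons.injEq] at happ
      obtain ⟨rfl, happ'⟩ := happ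
      simp only [List.sum_cons] at hsum
      have hsum' : t.sum = t3.sum := by omega
      obtain ⟨h, h'⟩ := list_split_unique t t3 l2 l4 (fun x hx => h1 x (by simp [hx]))
        (fun x hx => h3 x (by simp [hx])) happ' hsum'
      exact ⟨by rw [h], h'⟩

lemma capp_inj {m m' : ℕ} {c₁ c₂ : Composition m} {c₁' c₂' : Composition m'}
    (h : capp c₁ c₁' = capp c₂ c₂') : c₁ = c₂ ∧ c₁' = c₂' := by
  have hb : c₁.blocks ++ c₁'.blocks = c₂.blocks ++ c₂'.blocks := by
    have := congrArg Composition.blocks h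
    simpa using this
  obtain ⟨h1, h2⟩ := list_split_unique c₁.blocks c₂.blocks c₁'.blocks c₂'.blocks
    (fun _ hx => c₁.blocks_pos hx) (fun _ hx => c₂.blocks_pos hx) hb
    (by rw [c₁.blocks_sum, c₂.blocks_sum])
  exact ⟨Composition.ext h1, Composition.ext h2⟩

lemma capp_surj {m m' : ℕ} (e : Composition (m + m')) (he : m ∈ e.des) :
    ∃ (d : Composition m) (d' : Composition m'), capp d d' = e := by
  obtain ⟨i, hi, hsize⟩ := (mem_des_iff e m).1 he
  refine ⟨⟨e.blocks.take (i + 1), ?_, ?_⟩, ⟨e.blocks.drop (i + 1), ?_, ?_⟩, ?_⟩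
  · intro x hx; exact e.blocks_pos (List.mem_of_mem_take hx)
  · exact hsize
  · intro x hx; exact e.blocks_pos (List.mem_of_mem_drop hx)
  · have := e.blocks_sum
    rw [← List.take_append_drop (i + 1) e.blocks, List.sum_append] at this
    have ht : (e.blocks.take (i + 1)).sum = m := hsize
    omega
  · apply Composition.ext
    simp [capp, List.take_append_drop]

end RibAux

open RibAux in
/-- The ribbon multiplication rule `R_K · R_{K'} = R_{K·K'} + R_{K▷K'}`,
where, in terms of descent sets, `Des(K·K') = Des K ∪ {m} ∪ (Des K' + m)` and
`Des(K▷K') = Des K ∪ (Des K' + m)` for `K ⊨ m`, `K' ⊨ m'` (both nonempty). -/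
theorem stmt11 (m m' : ℕ) (hm : 0 < m) (hm' : 0 < m')
    (K : Composition m) (K' : Composition m')
    (L L' : Composition (m + m'))
    (hL : L.des = K.des ∪ {m} ∪ K'.des.image (fun d => d + m))
    (hL' : L'.des = K.des ∪ K'.des.image (fun d => d + m)) :
    Rib K * Rib K' = Rib L + Rib L' := by
  classical
  set A := K.des with hA
  set B := K'.des.image (fun d => d + m) with hB
  have hAlt : ∀ x ∈ A, x < m := fun x hx => des_lt K hx
  have hBgt : ∀ x ∈ B, m < x := by
    intro x hx
    obtain ⟨y, hy, rfl⟩ := Finset.mem_image.1 hx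
    have := des_pos K' hy
    omega
  have hmA : m ∉ A := fun h => lt_irrefl m (hAlt m h)
  have hmB : m ∉ B := fun h => lt_irrefl m (hBgt m h)
  have hAB : Disjoint A B := Finset.disjoint_left.2 fun x hx hx' =>
    absurd (hAlt x hx) (not_lt.2 (hBgt x hx').le)
  have hcardB : B.card = K'.des.card :=
    Finset.card_image_of_injective _ (add_left_injective m)
  have hKlen : K.length = A.card + 1 := length_eq_card_des K hm
  have hK'len : K'.length = K'.des.card + 1 := length_eq_card_des K' hm'
  have hcardL : L.des.card = A.card + B.card + 1 := by
    rw [hL]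
    rw [Finset.card_union_of_disjoint, Finset.card_union_of_disjoint]
    · simp; omega
    · simpa using hmA
    · refine Finset.disjoint_left.2 fun x hx hx' => ?_
      rcases Finset.mem_union.1 hx with h | h
      · exact absurd (hAlt x h) (not_lt.2 (hBgt x hx').le)
      · simp only [Finset.mem_singleton] at h; subst h; exact hmB hx'
  have hcardL' : L'.des.card = A.card + B.card := by
    rw [hL', Finset.card_union_of_disjoint hAB]
  have hLlen : L.length = K.length + K'.length := by
    rw [length_eq_card_des L (by omega), hcardL, hKlen, hK'len, hcardB]; omega
  have hL'len : L'.length = L.length - 1 := by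
    rw [length_eq_card_des L (by omega), length_eq_card_des L' (by omega), hcardL, hcardL']
    omega
  have hL'L : L'.des ⊆ L.des := by
    rw [hL, hL']
    intro x hx
    rcases Finset.mem_union.1 hx with h | h
    · exact Finset.mem_union.2 (Or.inl (Finset.mem_union.2 (Or.inl h)))
    · exact Finset.mem_union.2 (Or.inr h)
  -- Step 1: RHS reduces to a single sum over `e` with `m ∈ e.des ⊆ L.des`.
  have step1 : Rib L + Rib L' =
      ∑ e ∈ Finset.univ.filter (fun e : Composition (m + m') =>
        e.des ⊆ L.des ∧ m ∈ e.des), ((-1 : ℚ) ^ (L.length + e.length)) • Sprod e := by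
    have hfilter : (Finset.univ.filter (fun e : Composition (m + m') => e.des ⊆ L.des)) =
        (Finset.univ.filter (fun e : Composition (m + m') => e.des ⊆ L.des ∧ m ∈ e.des)) ∪
        (Finset.univ.filter (fun e : Composition (m + m') => e.des ⊆ L'.des)) := by
      ext e
      simp only [Finset.mem_filter, Finset.mem_union, Finset.mem_univ, true_and]
      constructor
      · intro h
        by_cases hme : m ∈ e.des
        · exact Or.inl ⟨h, hme⟩
        · right
          intro x hx
          have hx' := h hx
          rw [hL] at hx'
          rw [hL']
          rcases Finset.mem_union.1 hx' with h' | h'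
          · rcases Finset.mem_union.1 h' with h'' | h''
            · exact Finset.mem_union.2 (Or.inl h'')
            · simp only [Finset.mem_singleton] at h''
              subst h''; exact absurd hx hme
          · exact Finset.mem_union.2 (Or.inr h')
      · rintro (⟨h, _⟩ | h)
        · exact h
        · exact h.trans hL'L
    have hdisj : Disjoint
        (Finset.univ.filter (fun e : Composition (m + m') => e.des ⊆ L.des ∧ m ∈ e.des))
        (Finset.univ.filter (fun e : Composition (m + m') => e.des ⊆ L'.des)) := by
      refine Finset.disjoint_left.2 fun e he he' => ?_
      simp only [Finset.mem_filter, Finset.mem_univ, true_and] at he he'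
      have := he' he.2
      rw [hL'] at this
      rcases Finset.mem_union.1 this with h | h
      exacts [hmA h, hmB h]
    have hsum2 : ∑ e ∈ (Finset.univ.filter (fun e : Composition (m + m') =>
          e.des ⊆ L'.des)), ((-1 : ℚ) ^ (L.length + e.length)) • Sprod e = - Rib L' := by
      rw [Rib, ← Finset.sum_neg_distrib]
      apply Finset.sum_congr rfl
      intro e _
      have : L.length + e.length = (L'.length + e.length) + 1 := by omega
      rw [this, pow_succ]
      simp [neg_smul]
    rw [Rib, hfilter, Finset.sum_union hdisj, hsum2]
    abel
  -- Step 2: LHS as a sum over pairs.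
  have step2 : Rib K * Rib K' =
      ∑ p ∈ (Finset.univ.filter (fun d : Composition m => d.des ⊆ K.des)) ×ˢ
        (Finset.univ.filter (fun d : Composition m' => d.des ⊆ K'.des)),
        ((-1 : ℚ) ^ (L.length + (capp p.1 p.2).length)) • (Sprod p.1 * Sprod p.2) := by
    rw [Rib, Rib, Finset.sum_mul_sum, ← Finset.sum_product']
    apply Finset.sum_congr rfl
    intro p _
    rw [smul_mul_smul_comm, ← pow_add]
    congr 1
    rw [capp_length, hLlen]
    ring_nf
  rw [step1, step2]
  -- Step 3: the bijection `(d, d') ↦ capp d d'`.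
  refine Finset.sum_bij (fun p _ => capp p.1 p.2) ?_ ?_ ?_ ?_
  · rintro ⟨d, d'⟩ hp
    simp only [Finset.mem_product, Finset.mem_filter, Finset.mem_univ, true_and] at hp
    obtain ⟨hd, hd'⟩ := hp
    simp only [Finset.mem_filter, Finset.mem_univ, true_and]
    rw [des_capp hm hm', hL]
    constructor
    · apply Finset.union_subset_union
      · exact Finset.union_subset_union hd (le_refl {m})
      · exact Finset.image_subset_image hd'
    · exact Finset.mem_union.2 (Or.inl (Finset.mem_union.2 (Or.inr (Finset.mem_singleton.2 rfl))))
  · rintro ⟨d₁, d₁'⟩ h₁ ⟨d₂, d₂'⟩ h₂ h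
    obtain ⟨h1, h2⟩ := capp_inj h
    exact Prod.ext h1 h2
  · rintro e he
    simp only [Finset.mem_filter, Finset.mem_univ, true_and] at he
    obtain ⟨hsub, hme⟩ := he
    obtain ⟨d, d', rfl⟩ := capp_surj e hme
    rw [des_capp hm hm', hL] at hsub
    have hd : d.des ⊆ K.des := by
      intro x hx
      have hx' : x ∈ A ∪ {m} ∪ B :=
        hsub (Finset.mem_union.2 (Or.inl (Finset.mem_union.2 (Or.inl hx))))
      have hxm : x < m := des_lt d hx
      rcases Finset.mem_union.1 hx' with h | h
      · rcases Finset.mem_union.1 h with h' | h'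
        · exact h'
        · simp only [Finset.mem_singleton] at h'; omega
      · exact absurd (hBgt x h) (by omega)
    have hd' : d'.des ⊆ K'.des := by
      intro x hx
      have hx' : x + m ∈ A ∪ {m} ∪ B :=
        hsub (Finset.mem_union.2 (Or.inr (Finset.mem_image.2 ⟨x, hx, rfl⟩)))
      have hxpos : 0 < x := des_pos d' hx
      rcases Finset.mem_union.1 hx' with h | h
      · rcases Finset.mem_union.1 h with h' | h'
        · exact absurd (hAlt _ h') (by omega)
        · simp only [Finset.mem_singleton] at h'; omega
      · obtain ⟨y, hy, hxy⟩ := Finset.mem_image.1 h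
        have : y = x := by omega
        subst this; exact hy
    refine ⟨⟨d, d'⟩, ?_, rfl⟩
    simp only [Finset.mem_product, Finset.mem_filter, Finset.mem_univ, true_and]
    exact ⟨hd, hd'⟩
  · rintro ⟨d, d'⟩ _
    rw [Sprod_capp]
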